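/- arXiv:1310.1684 — 2 statements merged into one kernel-verified Lean document; each statement's English description precedes it below -/
import Mathlib

section
/- Fix an integer p ≥ 1 and define I : M_p(ℂ) → [0,∞] by I(v) = −log det(I_p − vvᴴ) if I_p − vvᴴ is positive definite, and I(v) = ∞ otherwise. Then I is a good rate function: I is lower semicontinuous on M_p(ℂ), and for every real a ≥ 0 the sublevel set {v ∈ M_p(ℂ) : I(v) ≤ a} is compact. -/
open MeasureTheory Matrix Filter
open scoped ComplexOrder Classical ENNReal

/-- The rate function `I(v) = -log det(I - vvᴴ)` if `I - vvᴴ` is positive definite,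
`+∞` otherwise, with values in the extended nonnegative reals `[0, ∞]`. -/
noncomputable def rateI (p : ℕ) (v : Matrix (Fin p) (Fin p) ℂ) : ℝ≥0∞ :=
  if ((1 : Matrix (Fin p) (Fin p) ℂ) - v * vᴴ).PosDef then
    ENNReal.ofReal (- Real.log (((1 : Matrix (Fin p) (Fin p) ℂ) - v * vᴴ).det.re))
  else ⊤

section aux

open Set

lemma aux_posDef_of_posSemidef_det_ne_zero {n : ℕ} {A : Matrix (Fin n) (Fin n) ℂ}
    (hA : A.PosSemidef) (hdet : A.det ≠ 0) : A.PosDef := by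
  refine Matrix.PosDef.of_dotProduct_mulVec_pos hA.1 (fun x hx => (hA.dotProduct_mulVec_nonneg x).lt_of_ne fun h => ?_)
  have h0 : A *ᵥ x = 0 := (hA.dotProduct_mulVec_zero_iff x).mp h.symm
  have hinj : Function.Injective A.mulVec :=
    Matrix.mulVec_injective_iff_isUnit.mpr
      ((Matrix.isUnit_iff_isUnit_det A).mpr (isUnit_iff_ne_zero.mpr hdet))
  exact hx (hinj (by simpa using h0))

lemma aux_isHermitian (p : ℕ) (v : Matrix (Fin p) (Fin p) ℂ) :
    ((1 : Matrix (Fin p) (Fin p) ℂ) - v * vᴴ).IsHermitian :=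
  Matrix.isHermitian_one.sub (Matrix.isHermitian_mul_conjTranspose_self v)

lemma aux_sublevel_eq (p : ℕ) {a : ℝ} (ha : 0 ≤ a) :
    {v : Matrix (Fin p) (Fin p) ℂ | rateI p v ≤ ENNReal.ofReal a} =
      {v : Matrix (Fin p) (Fin p) ℂ |
          ((1 : Matrix (Fin p) (Fin p) ℂ) - v * vᴴ).PosSemidef} ∩
      {v : Matrix (Fin p) (Fin p) ℂ |
          Real.exp (-a) ≤ ((1 : Matrix (Fin p) (Fin p) ℂ) - v * vᴴ).det.re} := by
  ext v
  set A := (1 : Matrix (Fin p) (Fin p) ℂ) - v * vᴴ with hA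
  constructor
  · intro hv
    by_cases hpd : A.PosDef
    · have hdet : (0 : ℂ) < A.det := hpd.det_pos
      have hre : 0 < A.det.re := by
        rw [Complex.lt_def] at hdet; simpa using hdet.1
      simp only [rateI, Set.mem_setOf_eq, ← hA, if_pos hpd] at hv
      have h1 : -Real.log A.det.re ≤ a := (ENNReal.ofReal_le_ofReal_iff ha).mp hv
      refine ⟨hpd.posSemidef, ?_⟩
      have h2 : -a ≤ Real.log A.det.re := by linarith
      calc Real.exp (-a) ≤ Real.exp (Real.log A.det.re) := Real.exp_le_exp.mpr h2
        _ = A.det.re := Real.exp_log hre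
    · exfalso
      simp only [rateI, Set.mem_setOf_eq, ← hA, if_neg hpd] at hv
      exact ENNReal.ofReal_ne_top (top_le_iff.mp hv)
  · rintro ⟨hpsd, hd⟩
    have hre : 0 < A.det.re := lt_of_lt_of_le (Real.exp_pos _) hd
    have hdet : A.det ≠ 0 := fun h => by simp [h] at hre
    have hpd := aux_posDef_of_posSemidef_det_ne_zero hpsd hdet
    simp only [rateI, Set.mem_setOf_eq, ← hA, if_pos hpd]
    rw [if_pos hpd]
    refine ENNReal.ofReal_le_ofReal ?_
    have h1 : -a ≤ Real.log A.det.re := by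
      rw [Real.le_log_iff_exp_le hre]; exact hd
    linarith

lemma aux_isClosed_posSemidef (p : ℕ) :
    IsClosed {v : Matrix (Fin p) (Fin p) ℂ |
        ((1 : Matrix (Fin p) (Fin p) ℂ) - v * vᴴ).PosSemidef} := by
  have hcont : Continuous fun v : Matrix (Fin p) (Fin p) ℂ =>
      (1 : Matrix (Fin p) (Fin p) ℂ) - v * vᴴ :=
    continuous_const.sub (continuous_id.matrix_mul continuous_id.matrix_conjTranspose)
  have heq : {v : Matrix (Fin p) (Fin p) ℂ |
        ((1 : Matrix (Fin p) (Fin p) ℂ) - v * vᴴ).PosSemidef} =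
      ⋂ x : Fin p → ℂ, {v : Matrix (Fin p) (Fin p) ℂ |
        (0 : ℂ) ≤ star x ⬝ᵥ (((1 : Matrix (Fin p) (Fin p) ℂ) - v * vᴴ) *ᵥ x)} := by
    ext v
    simp only [Set.mem_setOf_eq, Set.mem_iInter]
    exact ⟨fun h x => h.dotProduct_mulVec_nonneg x, fun h => PosSemidef.of_dotProduct_mulVec_nonneg (aux_isHermitian p v) h⟩
  rw [heq]
  refine isClosed_iInter fun x => ?_
  have hf : Continuous fun v : Matrix (Fin p) (Fin p) ℂ =>
      star x ⬝ᵥ (((1 : Matrix (Fin p) (Fin p) ℂ) - v * vᴴ) *ᵥ x) :=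
    (continuous_const).dotProduct (hcont.matrix_mulVec continuous_const)
  have heq2 : {v : Matrix (Fin p) (Fin p) ℂ |
        (0 : ℂ) ≤ star x ⬝ᵥ (((1 : Matrix (Fin p) (Fin p) ℂ) - v * vᴴ) *ᵥ x)} =
      {v : Matrix (Fin p) (Fin p) ℂ |
        0 ≤ (star x ⬝ᵥ (((1 : Matrix (Fin p) (Fin p) ℂ) - v * vᴴ) *ᵥ x)).re} ∩
      {v : Matrix (Fin p) (Fin p) ℂ |
        (star x ⬝ᵥ (((1 : Matrix (Fin p) (Fin p) ℂ) - v * vᴴ) *ᵥ x)).im = 0} := by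
    ext v
    simp only [Set.mem_setOf_eq, Set.mem_inter_iff, Complex.le_def, Complex.zero_re,
      Complex.zero_im]
    tauto
  rw [heq2]
  exact (isClosed_le continuous_const (Complex.continuous_re.comp hf)).inter
    (isClosed_eq (Complex.continuous_im.comp hf) continuous_const)

lemma aux_entry_le {p : ℕ} {v : Matrix (Fin p) (Fin p) ℂ}
    (h : ((1 : Matrix (Fin p) (Fin p) ℂ) - v * vᴴ).PosSemidef) (i j : Fin p) :
    ‖v i j‖ ≤ 1 := by
  have h0 := h.dotProduct_mulVec_nonneg (Pi.single i 1)
  have hre : 0 ≤ (star (Pi.single i (1:ℂ)) ⬝ᵥ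
      (((1 : Matrix (Fin p) (Fin p) ℂ) - v * vᴴ) *ᵥ Pi.single i 1)).re := by
    rw [Complex.le_def] at h0; simpa using h0.1
  have hval : (star (Pi.single i (1:ℂ)) ⬝ᵥ
      (((1 : Matrix (Fin p) (Fin p) ℂ) - v * vᴴ) *ᵥ Pi.single i 1)).re
      = 1 - ∑ k, ‖v i k‖ ^ 2 := by
    rw [Matrix.mulVec_single_one, dotProduct, Finset.sum_eq_single i]
    · simp only [Pi.star_apply, Pi.single_eq_same, star_one, one_mul, mul_one, Matrix.sub_apply,
        Matrix.one_apply_eq, Matrix.mul_apply, Matrix.conjTranspose_apply, Complex.star_def, Matrix.col_apply, Matrix.transpose_apply]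
      simp only [Complex.mul_conj, Complex.sub_re, Complex.one_re, Complex.re_sum,
        Complex.ofReal_re]
      congr 1
      refine Finset.sum_congr rfl fun k _ => ?_
      rw [Complex.normSq_eq_norm_sq]
    · intro b _ hb
      simp [Pi.single_eq_of_ne hb]
    · simp
  rw [hval] at hre
  have hj : ‖v i j‖ ^ 2 ≤ ∑ k, ‖v i k‖ ^ 2 :=
    Finset.single_le_sum (f := fun k => ‖v i k‖ ^ 2) (fun k _ => sq_nonneg _) (Finset.mem_univ j)
  nlinarith [norm_nonneg (v i j)]

lemma aux_isClosed_detre (p : ℕ) (a : ℝ) :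
    IsClosed {v : Matrix (Fin p) (Fin p) ℂ |
        Real.exp (-a) ≤ ((1 : Matrix (Fin p) (Fin p) ℂ) - v * vᴴ).det.re} := by
  have hdetc : Continuous fun v : Matrix (Fin p) (Fin p) ℂ =>
      ((1 : Matrix (Fin p) (Fin p) ℂ) - v * vᴴ).det.re :=
    Complex.continuous_re.comp
      ((continuous_const.sub
        (continuous_id.matrix_mul continuous_id.matrix_conjTranspose)).matrix_det)
  exact isClosed_le continuous_const hdetc

end aux

/-- The rate function `I(v) = -log det(I - vvᴴ)` (with `I(v) = ∞` when
`I - vvᴴ` is not positive definite) is a good rate function: it is lower semicontinuous on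
`M_p(ℂ)` and all its sublevel sets `{v : I v ≤ a}`, for real `a ≥ 0`, are compact. -/
theorem rateI_isGoodRateFunction (p : ℕ) (hp : 1 ≤ p) :
    LowerSemicontinuous (rateI p) ∧
      ∀ a : ℝ, 0 ≤ a → IsCompact {v : Matrix (Fin p) (Fin p) ℂ | rateI p v ≤ ENNReal.ofReal a} := by
  have hclosed : ∀ a : ℝ, 0 ≤ a →
      IsClosed {v : Matrix (Fin p) (Fin p) ℂ | rateI p v ≤ ENNReal.ofReal a} := by
    intro a ha
    rw [aux_sublevel_eq p ha]
    exact (aux_isClosed_posSemidef p).inter (aux_isClosed_detre p a)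
  constructor
  · rw [lowerSemicontinuous_iff_isClosed_preimage]
    intro y
    rcases eq_or_ne y ⊤ with rfl | hy
    · have : rateI p ⁻¹' Set.Iic ⊤ = Set.univ := by
        ext v; simp
      rw [this]; exact isClosed_univ
    · have hy' : y = ENNReal.ofReal y.toReal := (ENNReal.ofReal_toReal hy).symm
      have : rateI p ⁻¹' Set.Iic y
          = {v : Matrix (Fin p) (Fin p) ℂ | rateI p v ≤ ENNReal.ofReal y.toReal} := by
        ext v; rw [hy']; simp
      rw [this]
      exact hclosed _ ENNReal.toReal_nonneg
  · intro a ha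
    have hK : IsCompact {v : Matrix (Fin p) (Fin p) ℂ |
        ∀ i j, v i j ∈ Metric.closedBall (0 : ℂ) 1} := by
      have heq : {v : Matrix (Fin p) (Fin p) ℂ | ∀ i j, v i j ∈ Metric.closedBall (0 : ℂ) 1}
          = Set.univ.pi fun _ : Fin p =>
              Set.univ.pi fun _ : Fin p => Metric.closedBall (0 : ℂ) 1 := by
        ext v
        simp only [Set.mem_setOf_eq]
        exact ⟨fun h i _ j _ => h i j, fun h i j => h i (Set.mem_univ i) j (Set.mem_univ j)⟩
      rw [heq]
      exact isCompact_univ_pi fun _ => isCompact_univ_pi fun _ =>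
        isCompact_closedBall 0 1
    refine hK.of_isClosed_subset (hclosed a ha) ?_
    intro v hv
    rw [aux_sublevel_eq p ha] at hv
    intro i j
    rw [Metric.mem_closedBall, dist_zero_right]
    exact aux_entry_le hv.1 i j
end

section
/- Let 1 ≤ p ≤ N, let ε be an N×p complex matrix with εᴴε = I_p, and let U be an N×N unitary matrix. Set α = (εᴴUε)ᴴ and assume I_p − ααᴴ is positive definite. Let ρ^R = (I_p − ααᴴ)^{1/2}, ρ^L = (I_p − αᴴα)^{1/2} (positive semidefinite square roots) and ξ = (Uε − εαᴴ)·(ρ^R)⁻¹. Define the N×N matrix V = (ε·αᴴ + ξ·ρ^R)·εᴴ + (ε·ρ^L − ξ·α)·ξᴴ + (I_N − ε·εᴴ − ξ·ξᴴ). Then: (1) V is unitary; (2) V·ε = U·ε; (3) consequently W := Vᴴ·U is unitary and W·ε = ε. -/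
open Matrix
open scoped ComplexOrder

/-- The square root of a positive semidefinite matrix, as defined in Mathlib (Dec 2024),
since removed from Mathlib. -/
noncomputable def Matrix.PosSemidef.sqrt {n : Type*} [Fintype n] [DecidableEq n] {𝕜 : Type*}
    [RCLike 𝕜] {A : Matrix n n 𝕜} (hA : A.PosSemidef) : Matrix n n 𝕜 :=
  hA.isHermitian.eigenvectorUnitary.1 * diagonal ((↑) ∘ (√·) ∘ hA.isHermitian.eigenvalues) *
    (star hA.isHermitian.eigenvectorUnitary : Matrix n n 𝕜)

lemma Matrix.PosSemidef.posSemidef_sqrt {n : Type*} [Fintype n] [DecidableEq n] {𝕜 : Type*}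
    [RCLike 𝕜] {A : Matrix n n 𝕜} (hA : A.PosSemidef) : PosSemidef hA.sqrt := by
  apply PosSemidef.mul_mul_conjTranspose_same
  refine posSemidef_diagonal_iff.mpr fun i ↦ ?_
  rw [Function.comp_apply, RCLike.nonneg_iff]
  constructor
  · simp only [Function.comp_apply, RCLike.ofReal_re]
    exact Real.sqrt_nonneg _
  · simp only [Function.comp_apply, RCLike.ofReal_im]

lemma Matrix.PosSemidef.sq_sqrt {n : Type*} [Fintype n] [DecidableEq n] {𝕜 : Type*}
    [RCLike 𝕜] {A : Matrix n n 𝕜} (hA : A.PosSemidef) : hA.sqrt ^ 2 = A := by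
  let C : Matrix n n 𝕜 := hA.1.eigenvectorUnitary
  let E := diagonal ((↑) ∘ (√·) ∘ hA.1.eigenvalues : n → 𝕜)
  suffices C * (E * (star C * C) * E) * star C = A by
    rw [Matrix.PosSemidef.sqrt, pow_two]
    simpa only [← mul_assoc] using this
  have : star C * C = 1 := Matrix.mem_unitaryGroup_iff'.mp hA.1.eigenvectorUnitary.2
  rw [this, mul_one]
  have : E * E = diagonal ((↑) ∘ hA.1.eigenvalues) := by
    rw [diagonal_mul_diagonal]
    congr! with v
    simp [← pow_two, ← RCLike.ofReal_pow, Real.sq_sqrt (hA.eigenvalues_nonneg v)]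
  rw [this]
  have hs := hA.1.spectral_theorem
  rw [Unitary.conjStarAlgAut_apply] at hs
  exact hs.symm

lemma Matrix.PosSemidef.sqrt_mul_self {n : Type*} [Fintype n] [DecidableEq n] {𝕜 : Type*}
    [RCLike 𝕜] {A : Matrix n n 𝕜} (hA : A.PosSemidef) : hA.sqrt * hA.sqrt = A := by
  rw [← pow_two, hA.sq_sqrt]

lemma Matrix.PosSemidef.eq_of_sq_eq_sq' {n : Type*} [Fintype n] [DecidableEq n] {𝕜 : Type*}
    [RCLike 𝕜] {A : Matrix n n 𝕜} (hA : A.PosSemidef) {B : Matrix n n 𝕜} (hB : PosSemidef B)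
    (hAB : A ^ 2 = B ^ 2) : A = B := by
  by_contra h_ne
  let ⟨v, t, ht, hv, hv'⟩ := (hA.1.sub hB.1).exists_eigenvector_of_ne_zero (sub_ne_zero.mpr h_ne)
  have h_sum : 0 = t * (star v ⬝ᵥ A *ᵥ v + star v ⬝ᵥ B *ᵥ v) := calc
    0 = star v ⬝ᵥ (A ^ 2 - B ^ 2) *ᵥ v := by rw [hAB, sub_self, zero_mulVec, dotProduct_zero]
    _ = star v ⬝ᵥ A *ᵥ (A - B) *ᵥ v + star v ⬝ᵥ (A - B) *ᵥ B *ᵥ v := by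
      rw [mulVec_mulVec, mulVec_mulVec, ← dotProduct_add, ← add_mulVec, mul_sub, sub_mul,
        add_sub, sub_add_cancel, pow_two, pow_two]
    _ = t * (star v ⬝ᵥ A *ᵥ v) + (star v) ᵥ* (A - B)ᴴ ⬝ᵥ B *ᵥ v := by
      rw [hv', mulVec_smul, dotProduct_smul, RCLike.real_smul_eq_coe_mul,
        dotProduct_mulVec _ (A - B), hA.1.sub hB.1]
    _ = t * (star v ⬝ᵥ A *ᵥ v + star v ⬝ᵥ B *ᵥ v) := by
      simp_rw [← star_mulVec, hv', mul_add, ← RCLike.real_smul_eq_coe_mul, ← smul_dotProduct]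
      congr 2 with i
      simp only [Pi.star_apply, Pi.smul_apply, RCLike.real_smul_eq_coe_mul, star_mul',
        RCLike.star_def, RCLike.conj_ofReal]
  replace h_sum : star v ⬝ᵥ A *ᵥ v + star v ⬝ᵥ B *ᵥ v = 0 := by
    rw [eq_comm, ← mul_zero (t : 𝕜)] at h_sum
    exact mul_left_cancel₀ (RCLike.ofReal_ne_zero.mpr ht) h_sum
  have h_van : star v ⬝ᵥ A *ᵥ v = 0 ∧ star v ⬝ᵥ B *ᵥ v = 0 := by
    refine ⟨le_antisymm ?_ (hA.dotProduct_mulVec_nonneg v),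
      le_antisymm ?_ (hB.dotProduct_mulVec_nonneg v)⟩
    · rw [add_comm, add_eq_zero_iff_eq_neg] at h_sum
      simpa only [h_sum, neg_nonneg] using hB.dotProduct_mulVec_nonneg v
    · simpa only [add_eq_zero_iff_eq_neg.mp h_sum, neg_nonneg] using hA.dotProduct_mulVec_nonneg v
  have aux : star v ⬝ᵥ (A - B) *ᵥ v = 0 := by
    rw [sub_mulVec, dotProduct_sub, h_van.1, h_van.2, sub_zero]
  rw [hv', dotProduct_smul, RCLike.real_smul_eq_coe_mul, mul_eq_zero,
    dotProduct_star_self_eq_zero, RCLike.ofReal_eq_zero] at aux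
  exact hv (aux.resolve_left ht)

lemma Matrix.PosSemidef.eq_sqrt_of_sq_eq {n : Type*} [Fintype n] [DecidableEq n] {𝕜 : Type*}
    [RCLike 𝕜] {A : Matrix n n 𝕜} (hA : A.PosSemidef) {B : Matrix n n 𝕜} (hB : PosSemidef B)
    (hAB : A ^ 2 = B) : A = hB.sqrt := by
  apply hA.eq_of_sq_eq_sq' hB.posSemidef_sqrt
  rw [hAB, hB.sq_sqrt]

/-- If `B` commutes with a positive semidefinite matrix `A`, it commutes with its square root. -/
lemma commute_posSemidef_sqrt {n : Type*} [Fintype n] [DecidableEq n]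
    {A B : Matrix n n ℂ} (hA : A.PosSemidef) (h : B * A = A * B) :
    B * hA.sqrt = hA.sqrt * B := by
  set u : Matrix n n ℂ := (hA.1.eigenvectorUnitary : Matrix n n ℂ) with hu
  have hu1 : u * star u = 1 := Matrix.mem_unitaryGroup_iff.mp hA.1.eigenvectorUnitary.2
  have hu2 : star u * u = 1 := Matrix.mem_unitaryGroup_iff'.mp hA.1.eigenvectorUnitary.2
  set D : Matrix n n ℂ := Matrix.diagonal (RCLike.ofReal ∘ hA.1.eigenvalues) with hD
  set D' : Matrix n n ℂ :=
    Matrix.diagonal ((↑) ∘ Real.sqrt ∘ hA.1.eigenvalues) with hD'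
  have hspec : A = u * D * star u := by
    have hs := hA.1.spectral_theorem
    rwa [Unitary.conjStarAlgAut_apply] at hs
  have hsqrt : hA.sqrt = u * D' * star u := rfl
  set B' : Matrix n n ℂ := star u * B * u with hB'
  have hDval : star u * A * u = D := by
    rw [hspec]
    calc star u * (u * D * star u) * u
        = (star u * u) * D * (star u * u) := by
          simp only [Matrix.mul_assoc]
      _ = D := by rw [hu2]; simp
  have hBD : B' * D = D * B' := by
    rw [hB', ← hDval]
    calc star u * B * u * (star u * A * u)
        = star u * (B * (u * star u) * A) * u := by simp only [Matrix.mul_assoc]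
      _ = star u * (B * A) * u := by rw [hu1]; simp [Matrix.mul_assoc]
      _ = star u * (A * B) * u := by rw [h]
      _ = star u * (A * (u * star u) * B) * u := by rw [hu1]; simp [Matrix.mul_assoc]
      _ = star u * A * u * (star u * B * u) := by simp only [Matrix.mul_assoc]
  have hBD' : B' * D' = D' * B' := by
    ext i j
    have h1 : B' i j * (RCLike.ofReal (hA.1.eigenvalues j) : ℂ)
        = (RCLike.ofReal (hA.1.eigenvalues i) : ℂ) * B' i j := by
      have := congrFun (congrFun hBD i) j
      simpa [hD, Matrix.mul_diagonal, Matrix.diagonal_mul] using this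
    have key : B' i j * (Real.sqrt (hA.1.eigenvalues j) : ℂ)
        = (Real.sqrt (hA.1.eigenvalues i) : ℂ) * B' i j := by
      rcases eq_or_ne (B' i j) 0 with h0 | h0
      · simp [h0]
      · have h2 : ((RCLike.ofReal (hA.1.eigenvalues j) : ℂ)
            - (RCLike.ofReal (hA.1.eigenvalues i) : ℂ)) * B' i j = 0 := by
          linear_combination h1
        rcases mul_eq_zero.mp h2 with h3 | h3
        · have hij : hA.1.eigenvalues j = hA.1.eigenvalues i := by
            have := sub_eq_zero.mp h3
            exact_mod_cast this
          rw [hij, mul_comm]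
        · exact absurd h3 h0
    simpa [hD', Matrix.mul_diagonal, Matrix.diagonal_mul] using key
  have h1 : u * B' = B * u := by
    rw [hB']
    calc u * (star u * B * u) = (u * star u) * B * u := by simp only [Matrix.mul_assoc]
      _ = B * u := by rw [hu1]; simp
  have h2 : B' * star u = star u * B := by
    rw [hB']
    calc star u * B * u * star u = star u * B * (u * star u) := by simp only [Matrix.mul_assoc]
      _ = star u * B := by rw [hu1]; simp
  rw [hsqrt]
  calc B * (u * D' * star u) = (B * u) * D' * star u := by simp only [Matrix.mul_assoc]
    _ = (u * B') * D' * star u := by rw [h1]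
    _ = u * (B' * D') * star u := by simp only [Matrix.mul_assoc]
    _ = u * (D' * B') * star u := by rw [hBD']
    _ = u * D' * (B' * star u) := by simp only [Matrix.mul_assoc]
    _ = u * D' * (star u * B) := by rw [h2]
    _ = u * D' * star u * B := by simp only [Matrix.mul_assoc]

/-- A block diagonal matrix with positive semidefinite blocks is positive semidefinite. -/
lemma posSemidef_fromBlocks_diag {m n : Type*} [Fintype m] [Fintype n]
    {A : Matrix m m ℂ} {D : Matrix n n ℂ} (hA : A.PosSemidef) (hD : D.PosSemidef) :
    (Matrix.fromBlocks A 0 0 D).PosSemidef := by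
  rw [Matrix.posSemidef_iff_dotProduct_mulVec]
  constructor
  · show (Matrix.fromBlocks A 0 0 D)ᴴ = _
    rw [Matrix.fromBlocks_conjTranspose]
    simp [hA.1.eq, hD.1.eq]
  · intro x
    have hx : star x = Sum.elim (star (x ∘ Sum.inl)) (star (x ∘ Sum.inr)) := by
      ext (i | i) <;> rfl
    rw [Matrix.fromBlocks_mulVec, hx]
    simp only [Matrix.zero_mulVec, add_zero, zero_add]
    rw [sumElim_dotProduct_sumElim]
    exact add_nonneg (hA.dotProduct_mulVec_nonneg _) (hD.dotProduct_mulVec_nonneg _)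

/-- Intertwining of positive semidefinite square roots. -/
lemma intertwine_sqrt {p : Type*} [Fintype p] [DecidableEq p]
    {M N α : Matrix p p ℂ} (hM : M.PosSemidef) (hN : N.PosSemidef)
    (h : α * N = M * α) : α * hN.sqrt = hM.sqrt * α := by
  have hC : (Matrix.fromBlocks M 0 0 N).PosSemidef := posSemidef_fromBlocks_diag hM hN
  have hDps : (Matrix.fromBlocks hM.sqrt 0 0 hN.sqrt).PosSemidef :=
    posSemidef_fromBlocks_diag hM.posSemidef_sqrt hN.posSemidef_sqrt
  have hsq : (Matrix.fromBlocks hM.sqrt 0 0 hN.sqrt) ^ 2 = Matrix.fromBlocks M 0 0 N := by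
    rw [pow_two, Matrix.fromBlocks_multiply]
    simp [hM.sqrt_mul_self, hN.sqrt_mul_self]
  have hCsqrt : Matrix.fromBlocks hM.sqrt 0 0 hN.sqrt = hC.sqrt :=
    hDps.eq_sqrt_of_sq_eq hC hsq
  have hXC : (Matrix.fromBlocks 0 α 0 0) * (Matrix.fromBlocks M 0 0 N)
      = (Matrix.fromBlocks M 0 0 N) * (Matrix.fromBlocks 0 α 0 0) := by
    rw [Matrix.fromBlocks_multiply, Matrix.fromBlocks_multiply]
    simp [h]
  have hkey := commute_posSemidef_sqrt hC hXC
  rw [← hCsqrt, Matrix.fromBlocks_multiply, Matrix.fromBlocks_multiply] at hkey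
  have := congrArg Matrix.toBlocks₁₂ hkey
  simpa [Matrix.toBlocks_fromBlocks₁₂] using this

/-- Let `1 ≤ p ≤ N`, `εᴴε = I_p`, `U` unitary, `α = (εᴴUε)ᴴ` with
`I_p - ααᴴ` positive definite, `ρ^R = (I_p - ααᴴ)^{1/2}`, `ρ^L = (I_p - αᴴα)^{1/2}` and
`ξ = (Uε - εαᴴ)(ρ^R)⁻¹`.  Then
`V = (εαᴴ + ξρ^R)εᴴ + (ερ^L - ξα)ξᴴ + (I_N - εεᴴ - ξξᴴ)` is unitary, `Vε = Uε`, and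
consequently `W = VᴴU` is unitary and fixes `ε`. -/
theorem deflation_step (p N : ℕ) (hp : 1 ≤ p) (hpN : p ≤ N)
    (ε : Matrix (Fin N) (Fin p) ℂ) (hε : εᴴ * ε = 1)
    (U : Matrix (Fin N) (Fin N) ℂ) (hU : U ∈ Matrix.unitaryGroup (Fin N) ℂ)
    (α : Matrix (Fin p) (Fin p) ℂ) (hα : α = (εᴴ * U * ε)ᴴ)
    (hpd : ((1 : Matrix (Fin p) (Fin p) ℂ) - α * αᴴ).PosDef)
    (h2 : ((1 : Matrix (Fin p) (Fin p) ℂ) - αᴴ * α).PosSemidef)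
    (ρR ρL : Matrix (Fin p) (Fin p) ℂ) (ξ : Matrix (Fin N) (Fin p) ℂ)
    (V : Matrix (Fin N) (Fin N) ℂ)
    (hρR : ρR = hpd.posSemidef.sqrt) (hρL : ρL = h2.sqrt)
    (hξ : ξ = (U * ε - ε * αᴴ) * ρR⁻¹)
    (hV : V = (ε * αᴴ + ξ * ρR) * εᴴ + (ε * ρL - ξ * α) * ξᴴ + (1 - ε * εᴴ - ξ * ξᴴ)) :
    V ∈ Matrix.unitaryGroup (Fin N) ℂ ∧
      V * ε = U * ε ∧
      Vᴴ * U ∈ Matrix.unitaryGroup (Fin N) ℂ ∧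
      (Vᴴ * U) * ε = ε := by
  have hUU : Uᴴ * U = 1 := Matrix.mem_unitaryGroup_iff'.mp hU
  have hαH : αᴴ = εᴴ * U * ε := by rw [hα, conjTranspose_conjTranspose]
  have hαd : α = εᴴ * Uᴴ * ε := by
    rw [hα]
    simp [Matrix.conjTranspose_mul, Matrix.mul_assoc]
  -- properties of ρR and ρL
  have hRps : ρR.PosSemidef := hρR ▸ hpd.posSemidef.posSemidef_sqrt
  have hLps : ρL.PosSemidef := hρL ▸ h2.posSemidef_sqrt
  have hRH : ρRᴴ = ρR := hRps.1
  have hLH : ρLᴴ = ρL := hLps.1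
  have hR2 : ρR * ρR = 1 - α * αᴴ := hρR ▸ hpd.posSemidef.sqrt_mul_self
  have hL2 : ρL * ρL = 1 - αᴴ * α := hρL ▸ h2.sqrt_mul_self
  have hRdet : IsUnit ρR.det := by
    have h1 : IsUnit (ρR.det * ρR.det) := by
      rw [← Matrix.det_mul, hR2, ← Matrix.isUnit_iff_isUnit_det]
      exact hpd.isUnit
    exact isUnit_of_mul_isUnit_left h1
  have hRiR : ρR⁻¹ * ρR = 1 := Matrix.nonsing_inv_mul ρR hRdet
  have hRRi : ρR * ρR⁻¹ = 1 := Matrix.mul_nonsing_inv ρR hRdet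
  have hRiH : ρR⁻¹ᴴ = ρR⁻¹ := by rw [Matrix.conjTranspose_nonsing_inv, hRH]
  -- ξ basics
  have hξρR : ξ * ρR = U * ε - ε * αᴴ := by
    rw [hξ, Matrix.mul_assoc, hRiR, Matrix.mul_one]
  have hεUε : εᴴ * (U * ε) = αᴴ := by rw [← Matrix.mul_assoc, ← hαH]
  have hεUHε : εᴴ * (Uᴴ * ε) = α := by rw [← Matrix.mul_assoc, ← hαd]
  have hεξ : εᴴ * ξ = 0 := by
    rw [hξ, ← Matrix.mul_assoc]
    have : εᴴ * (U * ε - ε * αᴴ) = 0 := by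
      rw [Matrix.mul_sub, hεUε, ← Matrix.mul_assoc, hε, Matrix.one_mul, sub_self]
    rw [this, Matrix.zero_mul]
  have hξε : ξᴴ * ε = 0 := by
    have := congrArg conjTranspose hεξ
    simpa [Matrix.conjTranspose_mul] using this
  have hgram : (U * ε - ε * αᴴ)ᴴ * (U * ε - ε * αᴴ) = ρR * ρR := by
    have e1 : (U * ε)ᴴ * (U * ε) = 1 := by
      rw [Matrix.conjTranspose_mul, Matrix.mul_assoc, ← Matrix.mul_assoc Uᴴ U ε, hUU,
        Matrix.one_mul, hε]
    have e2 : (U * ε)ᴴ * (ε * αᴴ) = α * αᴴ := by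
      rw [Matrix.conjTranspose_mul, Matrix.mul_assoc, ← Matrix.mul_assoc Uᴴ ε αᴴ,
        ← Matrix.mul_assoc εᴴ (Uᴴ * ε) αᴴ, hεUHε]
    have e3 : (ε * αᴴ)ᴴ * (U * ε) = α * αᴴ := by
      rw [Matrix.conjTranspose_mul, conjTranspose_conjTranspose, Matrix.mul_assoc, hεUε]
    have e4 : (ε * αᴴ)ᴴ * (ε * αᴴ) = α * αᴴ := by
      rw [Matrix.conjTranspose_mul, conjTranspose_conjTranspose, Matrix.mul_assoc,
        ← Matrix.mul_assoc εᴴ ε αᴴ, hε, Matrix.one_mul]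
    rw [hR2, Matrix.conjTranspose_sub, Matrix.sub_mul, Matrix.mul_sub, Matrix.mul_sub,
      e1, e2, e3, e4]
    abel
  have hξξ : ξᴴ * ξ = 1 := by
    rw [hξ, Matrix.conjTranspose_mul, hRiH]
    calc ρR⁻¹ * (U * ε - ε * αᴴ)ᴴ * ((U * ε - ε * αᴴ) * ρR⁻¹)
        = ρR⁻¹ * ((U * ε - ε * αᴴ)ᴴ * (U * ε - ε * αᴴ)) * ρR⁻¹ := by
          simp only [Matrix.mul_assoc]
      _ = ρR⁻¹ * (ρR * ρR) * ρR⁻¹ := by rw [hgram]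
      _ = (ρR⁻¹ * ρR) * (ρR * ρR⁻¹) := by simp only [Matrix.mul_assoc]
      _ = 1 := by rw [hRiR, hRRi, Matrix.one_mul]
  -- intertwining
  have hcomm : α * ρL = ρR * α := by
    rw [hρL, hρR]
    refine intertwine_sqrt hpd.posSemidef h2 ?_
    rw [Matrix.mul_sub, Matrix.sub_mul, Matrix.mul_one, Matrix.one_mul, Matrix.mul_assoc]
  -- collapse lemmas
  have hcol1 : ∀ X : Matrix (Fin p) (Fin p) ℂ, εᴴ * (ε * X) = X := fun X => by
    rw [← Matrix.mul_assoc, hε, Matrix.one_mul]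
  have hcol2 : ∀ X : Matrix (Fin p) (Fin p) ℂ, εᴴ * (ξ * X) = 0 := fun X => by
    rw [← Matrix.mul_assoc, hεξ, Matrix.zero_mul]
  have hcol3 : ∀ X : Matrix (Fin p) (Fin p) ℂ, ξᴴ * (ε * X) = 0 := fun X => by
    rw [← Matrix.mul_assoc, hξε, Matrix.zero_mul]
  have hcol4 : ∀ X : Matrix (Fin p) (Fin p) ℂ, ξᴴ * (ξ * X) = X := fun X => by
    rw [← Matrix.mul_assoc, hξξ, Matrix.one_mul]
  set A : Matrix (Fin N) (Fin p) ℂ := ε * αᴴ + ξ * ρR with hAdef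
  set B : Matrix (Fin N) (Fin p) ℂ := ε * ρL - ξ * α with hBdef
  set P : Matrix (Fin N) (Fin N) ℂ := 1 - ε * εᴴ - ξ * ξᴴ with hPdef
  have hPH : Pᴴ = P := by
    rw [hPdef]
    simp [Matrix.conjTranspose_sub, Matrix.conjTranspose_mul]
  have hPε : P * ε = 0 := by
    rw [hPdef, Matrix.sub_mul, Matrix.sub_mul, Matrix.one_mul, Matrix.mul_assoc, hε,
      Matrix.mul_one, Matrix.mul_assoc, hξε, Matrix.mul_zero]
    abel
  have hPξ : P * ξ = 0 := by
    rw [hPdef, Matrix.sub_mul, Matrix.sub_mul, Matrix.one_mul, Matrix.mul_assoc, hεξ,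
      Matrix.mul_zero, Matrix.mul_assoc, hξξ, Matrix.mul_one]
    abel
  have hAH : Aᴴ = α * εᴴ + ρR * ξᴴ := by
    rw [hAdef]
    simp [Matrix.conjTranspose_add, Matrix.conjTranspose_mul, hRH]
  have hBH : Bᴴ = ρL * εᴴ - αᴴ * ξᴴ := by
    rw [hBdef]
    simp [Matrix.conjTranspose_sub, Matrix.conjTranspose_mul, hLH]
  have hAA : Aᴴ * A = 1 := by
    rw [hAH, hAdef, Matrix.add_mul, Matrix.mul_add, Matrix.mul_add, Matrix.mul_assoc,
      Matrix.mul_assoc, Matrix.mul_assoc, Matrix.mul_assoc, hcol1, hcol2, hcol3, hcol4,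
      Matrix.mul_zero, Matrix.mul_zero, hR2]
    abel
  have hBB : Bᴴ * B = 1 := by
    rw [hBH, hBdef, Matrix.sub_mul, Matrix.mul_sub, Matrix.mul_sub, Matrix.mul_assoc,
      Matrix.mul_assoc, Matrix.mul_assoc, Matrix.mul_assoc, hcol1, hcol2, hcol3, hcol4,
      Matrix.mul_zero, Matrix.mul_zero, hL2]
    abel
  have hAB : Aᴴ * B = 0 := by
    rw [hAH, hBdef, Matrix.add_mul, Matrix.mul_sub, Matrix.mul_sub, Matrix.mul_assoc,
      Matrix.mul_assoc, Matrix.mul_assoc, Matrix.mul_assoc, hcol1, hcol2, hcol3, hcol4,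
      Matrix.mul_zero, Matrix.mul_zero, hcomm]
    abel
  have hBA : Bᴴ * A = 0 := by
    have := congrArg conjTranspose hAB
    simpa [Matrix.conjTranspose_mul] using this
  have hPA : P * A = 0 := by
    rw [hAdef, Matrix.mul_add, ← Matrix.mul_assoc, ← Matrix.mul_assoc, hPε, hPξ,
      Matrix.zero_mul, Matrix.zero_mul, add_zero]
  have hPB : P * B = 0 := by
    rw [hBdef, Matrix.mul_sub, ← Matrix.mul_assoc, ← Matrix.mul_assoc, hPε, hPξ,
      Matrix.zero_mul, Matrix.zero_mul, sub_zero]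
  have hAP : Aᴴ * P = 0 := by
    have := congrArg conjTranspose hPA
    simpa [Matrix.conjTranspose_mul, hPH] using this
  have hBP : Bᴴ * P = 0 := by
    have := congrArg conjTranspose hPB
    simpa [Matrix.conjTranspose_mul, hPH] using this
  have hPP : P * P = P := by
    nth_rewrite 2 [hPdef]
    rw [Matrix.mul_sub, Matrix.mul_sub, Matrix.mul_one, ← Matrix.mul_assoc,
      ← Matrix.mul_assoc, hPε, hPξ, Matrix.zero_mul, Matrix.zero_mul, sub_zero, sub_zero]
  have hVd : V = A * εᴴ + B * ξᴴ + P := hV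
  have hVH : Vᴴ = ε * Aᴴ + ξ * Bᴴ + P := by
    rw [hVd]
    simp [Matrix.conjTranspose_add, Matrix.conjTranspose_mul, hPH]
  have hVV : Vᴴ * V = 1 := by
    have t1 : (ε * Aᴴ) * (A * εᴴ) = ε * εᴴ := by
      rw [Matrix.mul_assoc, ← Matrix.mul_assoc Aᴴ A εᴴ, hAA, Matrix.one_mul]
    have t2 : (ε * Aᴴ) * (B * ξᴴ) = 0 := by
      rw [Matrix.mul_assoc, ← Matrix.mul_assoc Aᴴ B ξᴴ, hAB, Matrix.zero_mul, Matrix.mul_zero]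
    have t3 : (ε * Aᴴ) * P = 0 := by
      rw [Matrix.mul_assoc, hAP, Matrix.mul_zero]
    have t4 : (ξ * Bᴴ) * (A * εᴴ) = 0 := by
      rw [Matrix.mul_assoc, ← Matrix.mul_assoc Bᴴ A εᴴ, hBA, Matrix.zero_mul, Matrix.mul_zero]
    have t5 : (ξ * Bᴴ) * (B * ξᴴ) = ξ * ξᴴ := by
      rw [Matrix.mul_assoc, ← Matrix.mul_assoc Bᴴ B ξᴴ, hBB, Matrix.one_mul]
    have t6 : (ξ * Bᴴ) * P = 0 := by
      rw [Matrix.mul_assoc, hBP, Matrix.mul_zero]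
    have t7 : P * (A * εᴴ) = 0 := by
      rw [← Matrix.mul_assoc, hPA, Matrix.zero_mul]
    have t8 : P * (B * ξᴴ) = 0 := by
      rw [← Matrix.mul_assoc, hPB, Matrix.zero_mul]
    rw [hVH, hVd]
    simp only [Matrix.add_mul, Matrix.mul_add]
    rw [t1, t2, t3, t4, t5, t6, t7, t8, hPP, hPdef]
    abel
  have hVu : V ∈ Matrix.unitaryGroup (Fin N) ℂ := Matrix.mem_unitaryGroup_iff'.mpr hVV
  have hVε : V * ε = U * ε := by
    rw [hVd, Matrix.add_mul, Matrix.add_mul, Matrix.mul_assoc, hε, Matrix.mul_one,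
      Matrix.mul_assoc, hξε, Matrix.mul_zero, hPε, add_zero, add_zero, hAdef, hξρR]
    abel
  refine ⟨hVu, hVε, ?_, ?_⟩
  · exact mul_mem (Unitary.star_mem hVu) hU
  · rw [Matrix.mul_assoc, ← hVε, ← Matrix.mul_assoc, hVV, Matrix.one_mul]
end
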